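/- Let φ(x) = x² − 2 and t_0 ∈ ℤ with t_0 ≡ 0 or 1 (mod 4). Then for every n ≥ 1, the polynomial φ^∘n(x) − t_0 is irreducible over ℚ. -/
import Mathlib

open Polynomial

private noncomputable def Pit : ℕ → ℤ[X] := fun n => ((X ^ 2 - C (2 : ℤ)).comp)^[n] X

private lemma Pit_zero : Pit 0 = X := rfl

private lemma Pit_succ (n : ℕ) : Pit (n + 1) = (Pit n) ^ 2 - C 2 := by
  unfold Pit
  rw [Function.iterate_succ_apply']
  simp [sub_comp, pow_comp, X_comp, C_comp]

private lemma Pit_natDegree (n : ℕ) : (Pit n).natDegree = 2 ^ n := by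
  induction n with
  | zero => simp [Pit_zero]
  | succ n ih =>
    rw [Pit_succ, natDegree_sub_C, natDegree_pow, ih, pow_succ, mul_comm]

private lemma Pit_monic (n : ℕ) : (Pit n).Monic := by
  induction n with
  | zero => simpa [Pit_zero] using monic_X
  | succ n ih =>
    rw [Pit_succ, sub_eq_add_neg]
    apply (ih.pow 2).add_of_left
    rw [degree_neg]
    calc degree (C (2 : ℤ)) ≤ 0 := degree_C_le
    _ < degree ((Pit n) ^ 2) := by
        rw [degree_eq_natDegree (ih.pow 2).ne_zero]
        rw [natDegree_pow, Pit_natDegree]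
        exact_mod_cast Nat.pos_of_ne_zero (by positivity)

private lemma Pit_map2 (n : ℕ) :
    (Pit n).map (Int.castRingHom (ZMod 2)) = X ^ 2 ^ n := by
  induction n with
  | zero => simp [Pit_zero]
  | succ n ih =>
    rw [Pit_succ, Polynomial.map_sub, Polynomial.map_pow, ih, map_C]
    have h2 : ((Int.castRingHom (ZMod 2)) 2) = 0 := by decide
    rw [h2, C_0, sub_zero, ← pow_mul, ← pow_succ]

private lemma Pit_eval0 (n : ℕ) (hn : 1 ≤ n) : (Pit n).eval 0 % 4 = 2 := by
  induction n, hn using Nat.le_induction with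
  | base => simp [Pit_succ, Pit_zero]
  | succ n hn ih =>
    rw [Pit_succ]
    simp only [eval_sub, eval_pow, eval_C]
    obtain ⟨k, hk⟩ : ∃ k, (Pit n).eval 0 = 4 * k + 2 := ⟨(Pit n).eval 0 / 4, by omega⟩
    rw [hk]
    have : (4 * k + 2) ^ 2 - 2 = 2 + 4 * (4 * k ^ 2 + 4 * k) := by ring
    rw [this, Int.add_mul_emod_self_left]
    decide

private lemma Pit_eval1 (n : ℕ) (hn : 1 ≤ n) : (Pit n).eval 1 = -1 := by
  induction n, hn using Nat.le_induction with
  | base => simp [Pit_succ, Pit_zero]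
  | succ n hn ih => rw [Pit_succ]; simp [ih]

private lemma Pit_mapQ (n : ℕ) :
    (Pit n).map (Int.castRingHom ℚ) = ((X ^ 2 - C (2 : ℚ)).comp)^[n] X := by
  induction n with
  | zero => simp [Pit_zero]
  | succ n ih =>
    rw [Pit_succ, Function.iterate_succ_apply', Polynomial.map_sub,
      Polynomial.map_pow, ih, map_C]
    simp [sub_comp, pow_comp, X_comp, C_comp]

/-- Eisenstein criterion at 2 packaged for our situation. -/
private lemma eisen (Q : ℤ[X]) (n : ℕ) (hn : 1 ≤ n) (hm : Q.Monic)
    (hmap : Q.map (Int.castRingHom (ZMod 2)) = X ^ 2 ^ n)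
    (h0 : Q.coeff 0 % 4 = 2) :
    Irreducible (Q.map (Int.castRingHom ℚ)) := by
  have hd : Q.natDegree = 2 ^ n := by
    have h := hm.natDegree_map (Int.castRingHom (ZMod 2))
    rw [hmap, natDegree_X_pow] at h
    exact h.symm
  rw [← IsPrimitive.Int.irreducible_iff_irreducible_map_cast hm.isPrimitive]
  have hprime : (Ideal.span {(2 : ℤ)}).IsPrime :=
    (Ideal.span_singleton_prime (by norm_num)).mpr Int.prime_two
  apply irreducible_of_eisenstein_criterion hprime
  · rw [hm.leadingCoeff, Ideal.mem_span_singleton]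
    norm_num
  · intro k hk
    rw [degree_eq_natDegree hm.ne_zero, hd] at hk
    have hk' : k ≠ 2 ^ n := by exact_mod_cast ne_of_lt (by exact_mod_cast hk)
    have : (Q.coeff k : ZMod 2) = 0 := by
      have := congrArg (fun p => Polynomial.coeff p k) hmap
      simpa [coeff_map, coeff_X_pow, hk'] using this
    rw [Ideal.mem_span_singleton]
    exact_mod_cast (ZMod.intCast_zmod_eq_zero_iff_dvd _ 2).mp this
  · rw [degree_eq_natDegree hm.ne_zero, hd]
    exact_mod_cast Nat.pos_of_ne_zero (by positivity)
  · rw [Ideal.span_singleton_pow, Ideal.mem_span_singleton]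
    intro h
    have : (4 : ℤ) ∣ Q.coeff 0 := by norm_num at h ⊢; exact h
    omega
  · exact hm.isPrimitive

theorem stmt_18 (t₀ : ℤ) (ht : t₀ % 4 = 0 ∨ t₀ % 4 = 1) (n : ℕ) (hn : 1 ≤ n) :
    Irreducible
      (((Polynomial.X ^ 2 - Polynomial.C (2 : ℚ)).comp)^[n] Polynomial.X
        - Polynomial.C (t₀ : ℚ)) := by
  have hS : ((X ^ 2 - C (2 : ℚ)).comp)^[n] X - C (t₀ : ℚ)
      = (Pit n - C t₀).map (Int.castRingHom ℚ) := by
    rw [Polynomial.map_sub, Pit_mapQ, map_C]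
    norm_num
  have hmonic : (Pit n - C t₀).Monic := by
    rw [sub_eq_add_neg]
    apply (Pit_monic n).add_of_left
    rw [degree_neg]
    calc degree (C t₀) ≤ 0 := degree_C_le
    _ < degree (Pit n) := by
        rw [degree_eq_natDegree (Pit_monic n).ne_zero, Pit_natDegree]
        exact_mod_cast Nat.pos_of_ne_zero (by positivity)
  rcases ht with ht | ht
  · -- t₀ ≡ 0 mod 4
    rw [hS]
    apply eisen _ n hn hmonic
    · rw [Polynomial.map_sub, Pit_map2, map_C, eq_intCast]
      have : ((t₀ : ℤ) : ZMod 2) = 0 := by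
        rw [ZMod.intCast_zmod_eq_zero_iff_dvd]; omega
      rw [this, C_0, sub_zero]
    · rw [coeff_sub, coeff_C, coeff_zero_eq_eval_zero]
      have := Pit_eval0 n hn
      simp only [if_pos rfl]
      omega
  · -- t₀ ≡ 1 mod 4 : shift by 1
    have key : Irreducible (((Pit n - C t₀).comp (X + C 1)).map (Int.castRingHom ℚ)) := by
      apply eisen _ n hn (hmonic.comp_X_add_C 1)
      · rw [Polynomial.map_comp, Polynomial.map_sub, Pit_map2, map_C,
          Polynomial.map_add, map_C, Polynomial.map_X, eq_intCast, eq_intCast, Int.cast_one]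
        have ht1 : ((t₀ : ℤ) : ZMod 2) = 1 := by
          obtain ⟨k, hk⟩ : ∃ k, t₀ = 2 * k + 1 := ⟨t₀ / 2, by omega⟩
          rw [hk]
          push_cast
          rw [show ((2 : ZMod 2)) = 0 by decide]
          ring
        rw [ht1, sub_comp, pow_comp, X_comp, C_comp]
        have hch : (X + C (1 : ZMod 2)) ^ 2 ^ n = X ^ 2 ^ n + C 1 ^ 2 ^ n :=
          add_pow_char_pow _ _ _ n
        rw [hch]
        simp
      · rw [coeff_zero_eq_eval_zero, eval_comp]
        simp only [eval_add, eval_X, eval_C, zero_add, eval_sub]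
        rw [Pit_eval1 n hn]
        omega
    rw [hS, ← MulEquiv.irreducible_iff (algEquivAevalXAddC (1 : ℚ))]
    have : (algEquivAevalXAddC (1 : ℚ)) ((Pit n - C t₀).map (Int.castRingHom ℚ))
        = ((Pit n - C t₀).comp (X + C 1)).map (Int.castRingHom ℚ) := by
      rw [algEquivAevalXAddC_apply, ← comp_eq_aeval, Polynomial.map_comp,
        Polynomial.map_add, map_C, Polynomial.map_X]
      norm_num
    rw [this]
    exact key
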